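/- Let S ⊆ ℝⁿ×ℝᵖ be both sign-invariant and permutation-invariant with respect to x. Then conv(S) = {(x,z) : ∃ u, (u,z) ∈ conv(S₀) and u weakly submajorizes |x|}, where S₀ = S ∩ {(u,z) : u₁ ≥ ... ≥ uₙ ≥ 0}. -/

import Mathlib

open Finset

/-- The `i`-th largest entry (0-indexed) of the tuple `x`. -/
noncomputable def sortedDesc (n : ℕ) (x : Fin n → ℝ) : Fin n → ℝ :=
  fun i => x (Tuple.sort x i.rev)

/-- Sum of the `k` largest entries of `x`. -/
noncomputable def topSum (n : ℕ) (x : Fin n → ℝ) (k : ℕ) : ℝ :=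
  ∑ i ∈ Finset.univ.filter (fun i : Fin n => (i : ℕ) < k), sortedDesc n x i

/-- `u` majorizes `x`. -/
def Majorizes (n : ℕ) (u x : Fin n → ℝ) : Prop :=
  (∀ k, k < n → topSum n x k ≤ topSum n u k) ∧ (∑ i, x i = ∑ i, u i)

/-- `u` weakly submajorizes `x`. -/
def WeakSubmajorizes (n : ℕ) (u x : Fin n → ℝ) : Prop :=
  ∀ k, k ≤ n → topSum n x k ≤ topSum n u k

/-- Number of nonzero components. -/
noncomputable def suppCard (n : ℕ) (x : Fin n → ℝ) : ℕ :=
  (Finset.univ.filter (fun i => x i ≠ 0)).card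

lemma sortedDesc_perm (n : ℕ) (x : Fin n → ℝ) :
    ∃ σ : Equiv.Perm (Fin n), sortedDesc n x = x ∘ σ :=
  ⟨(Fin.revPerm).trans (Tuple.sort x), rfl⟩

lemma sortedDesc_antitone (n : ℕ) (x : Fin n → ℝ) : Antitone (sortedDesc n x) := by
  intro i j hij
  exact Tuple.monotone_sort x (Fin.rev_le_rev.mpr hij)

lemma strictMono_fin_le {k n : ℕ} {f : Fin k → Fin n} (hf : StrictMono f) :
    ∀ j : Fin k, (j : ℕ) ≤ (f j : ℕ) := by
  have H : ∀ m, ∀ h : m < k, m ≤ (f ⟨m, h⟩ : ℕ) := by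
    intro m
    induction m with
    | zero => intro h; exact Nat.zero_le _
    | succ m ih =>
      intro h
      have h' : m < k := Nat.lt_of_succ_lt h
      have h1 := ih h'
      have h2 : (f ⟨m, h'⟩ : ℕ) < (f ⟨m + 1, h⟩ : ℕ) := by
        have : (⟨m, h'⟩ : Fin k) < ⟨m + 1, h⟩ := by simp [Fin.lt_def]
        exact hf this
      omega
  intro j; exact H j.1 j.2

lemma filter_lt_eq_image {n k : ℕ} (hk : k ≤ n) :
    Finset.univ.filter (fun i : Fin n => (i : ℕ) < k)
      = Finset.univ.image (Fin.castLE hk) := by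
  ext i
  simp only [mem_filter, mem_univ, true_and, mem_image]
  constructor
  · intro h; exact ⟨⟨i, h⟩, by simp [Fin.ext_iff]⟩
  · rintro ⟨j, rfl⟩; exact j.2

lemma card_filter_lt {n k : ℕ} (hk : k ≤ n) :
    (Finset.univ.filter (fun i : Fin n => (i : ℕ) < k)).card = k := by
  rw [filter_lt_eq_image hk, Finset.card_image_of_injective _ (Fin.castLE_injective hk),
    card_univ, Fintype.card_fin]

lemma sum_filter_lt_eq {M : Type*} [AddCommMonoid M] {n k : ℕ} (hk : k ≤ n) (g : Fin n → M) :
    ∑ i ∈ Finset.univ.filter (fun i : Fin n => (i : ℕ) < k), g i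
      = ∑ j : Fin k, g (Fin.castLE hk j) := by
  rw [filter_lt_eq_image hk, Finset.sum_image (fun a _ b _ h => Fin.castLE_injective hk h)]

lemma sum_filter_lt_eq_range {n k : ℕ} (hk : k ≤ n) (g : Fin n → ℝ) :
    ∑ i ∈ Finset.univ.filter (fun i : Fin n => (i : ℕ) < k), g i
      = ∑ j ∈ Finset.range k, (if h : j < n then g ⟨j, h⟩ else 0) := by
  rw [sum_filter_lt_eq hk g, ← Fin.sum_univ_eq_sum_range (fun j => if h : j < n then g ⟨j, h⟩ else 0) k]
  refine Fintype.sum_congr _ _ fun j => ?_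
  rw [dif_pos (lt_of_lt_of_le j.isLt hk)]
  rfl

lemma antitone_sum_le {n : ℕ} {y : Fin n → ℝ} (hy : Antitone y) {A : Finset (Fin n)} {k : ℕ}
    (hA : A.card = k) :
    ∑ i ∈ A, y i ≤ ∑ i ∈ Finset.univ.filter (fun i : Fin n => (i : ℕ) < k), y i := by
  have hk : k ≤ n := by
    rw [← hA]
    simpa using Finset.card_le_univ A
  set e := A.orderIsoOfFin hA with he
  have hf : StrictMono (fun j : Fin k => ((e j : A) : Fin n)) :=
    fun a b h => Subtype.coe_lt_coe.mpr (e.strictMono h)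
  have h1 : ∑ i ∈ A, y i = ∑ j : Fin k, y ((e j : A) : Fin n) := by
    rw [← Finset.sum_coe_sort A y]
    exact (Equiv.sum_comp e.toEquiv (fun i : A => y i)).symm
  rw [h1, sum_filter_lt_eq hk y]
  refine Finset.sum_le_sum fun j _ => ?_
  refine hy ?_
  rw [Fin.le_def]
  exact strictMono_fin_le hf j

lemma topSum_def (n : ℕ) (x : Fin n → ℝ) (k : ℕ) :
    topSum n x k = ∑ i ∈ Finset.univ.filter (fun i : Fin n => (i : ℕ) < k), sortedDesc n x i :=
  rfl

lemma le_topSum {n : ℕ} (x : Fin n → ℝ) {A : Finset (Fin n)} {k : ℕ} (hA : A.card = k) :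
    ∑ i ∈ A, x i ≤ topSum n x k := by
  obtain ⟨σ, hσ⟩ := sortedDesc_perm n x
  have h1 : ∑ i ∈ A, x i = ∑ j ∈ A.map σ.symm.toEmbedding, sortedDesc n x j := by
    rw [Finset.sum_map]
    refine (Finset.sum_congr rfl fun i _ => ?_).symm
    rw [hσ]
    simp
  rw [h1, topSum_def]
  exact antitone_sum_le (sortedDesc_antitone n x) (by rw [Finset.card_map, hA])

lemma topSum_eq_sum {n : ℕ} (x : Fin n → ℝ) {k : ℕ} (hk : k ≤ n) :
    ∃ A : Finset (Fin n), A.card = k ∧ topSum n x k = ∑ i ∈ A, x i := by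
  obtain ⟨σ, hσ⟩ := sortedDesc_perm n x
  refine ⟨(Finset.univ.filter (fun i : Fin n => (i : ℕ) < k)).map σ.toEmbedding,
    by rw [Finset.card_map, card_filter_lt hk], ?_⟩
  rw [topSum_def, Finset.sum_map]
  exact Finset.sum_congr rfl fun i _ => by rw [hσ]; rfl

lemma topSum_mono {n : ℕ} {x y : Fin n → ℝ} (h : ∀ i, x i ≤ y i) {k : ℕ} (hk : k ≤ n) :
    topSum n x k ≤ topSum n y k := by
  obtain ⟨A, hA, hAx⟩ := topSum_eq_sum x hk
  rw [hAx]
  exact le_trans (Finset.sum_le_sum fun i _ => h i) (le_topSum y hA)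

lemma topSum_add_le {n : ℕ} (x y : Fin n → ℝ) {k : ℕ} (hk : k ≤ n) :
    topSum n (fun i => x i + y i) k ≤ topSum n x k + topSum n y k := by
  obtain ⟨A, hA, hAx⟩ := topSum_eq_sum (fun i => x i + y i) hk
  rw [hAx, Finset.sum_add_distrib]
  exact add_le_add (le_topSum x hA) (le_topSum y hA)

lemma topSum_smul {n : ℕ} (x : Fin n → ℝ) {a : ℝ} (ha : 0 ≤ a) {k : ℕ} (hk : k ≤ n) :
    topSum n (fun i => a * x i) k = a * topSum n x k := by
  obtain ⟨A, hA, hAx⟩ := topSum_eq_sum (fun i => a * x i) hk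
  obtain ⟨B, hB, hBx⟩ := topSum_eq_sum x hk
  apply le_antisymm
  · rw [hAx, ← Finset.mul_sum]
    exact mul_le_mul_of_nonneg_left (le_topSum x hA) ha
  · rw [hBx, Finset.mul_sum]
    exact le_topSum _ hB

lemma topSum_perm_le {n : ℕ} (x : Fin n → ℝ) (σ : Equiv.Perm (Fin n)) {k : ℕ} (hk : k ≤ n) :
    topSum n (x ∘ σ) k ≤ topSum n x k := by
  obtain ⟨A, hA, hAx⟩ := topSum_eq_sum (x ∘ σ) hk
  rw [hAx]
  have h1 : ∑ i ∈ A, (x ∘ σ) i = ∑ j ∈ A.map σ.toEmbedding, x j := by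
    rw [Finset.sum_map]; rfl
  rw [h1]
  exact le_topSum x (by rw [Finset.card_map, hA])

lemma topSum_perm {n : ℕ} (x : Fin n → ℝ) (σ : Equiv.Perm (Fin n)) {k : ℕ} (hk : k ≤ n) :
    topSum n (x ∘ σ) k = topSum n x k := by
  refine le_antisymm (topSum_perm_le x σ hk) ?_
  have h1 := topSum_perm_le (x ∘ σ) σ.symm hk
  have hxx : (x ∘ σ) ∘ σ.symm = x := by funext i; simp
  rwa [hxx] at h1

lemma topSum_antitone {n : ℕ} {u : Fin n → ℝ} (hu : Antitone u) {k : ℕ} (hk : k ≤ n) :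
    topSum n u k = ∑ i ∈ Finset.univ.filter (fun i : Fin n => (i : ℕ) < k), u i := by
  apply le_antisymm
  · obtain ⟨A, hA, hAx⟩ := topSum_eq_sum u hk
    rw [hAx]
    exact antitone_sum_le hu hA
  · exact le_topSum u (card_filter_lt hk)

lemma abel_nonpos : ∀ (n : ℕ) (D a : ℕ → ℝ), (∀ i j, i ≤ j → D j ≤ D i) →
    (∀ k, k < n → 0 ≤ D k) → (∀ k, k ≤ n → ∑ i ∈ Finset.range k, a i ≤ 0) →
    ∑ i ∈ Finset.range n, D i * a i ≤ 0 := by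
  intro n
  induction n with
  | zero => intro D a _ _ _; simp
  | succ m ih =>
    intro D a hD hD0 hT
    have e1 : ∑ i ∈ Finset.range m, (D i - D m) * a i
        = ∑ i ∈ Finset.range m, D i * a i - D m * ∑ i ∈ Finset.range m, a i := by
      rw [Finset.mul_sum, ← Finset.sum_sub_distrib]
      exact Finset.sum_congr rfl fun i _ => by ring
    have hstep : ∑ i ∈ Finset.range (m + 1), D i * a i
        = (∑ i ∈ Finset.range m, (D i - D m) * a i) + D m * ∑ i ∈ Finset.range (m + 1), a i := by
      rw [e1, Finset.sum_range_succ a, Finset.sum_range_succ (fun i => D i * a i)]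
      ring
    rw [hstep]
    have h1 : ∑ i ∈ Finset.range m, (D i - D m) * a i ≤ 0 :=
      ih (fun i => D i - D m) a (fun i j hij => by have := hD i j hij; linarith)
        (fun k hk => by have := hD k m (le_of_lt hk); linarith)
        (fun k hk => hT k (le_trans hk (Nat.le_succ m)))
    have h2 : 0 ≤ D m := hD0 m (Nat.lt_succ_self m)
    have h3 : ∑ i ∈ Finset.range (m + 1), a i ≤ 0 := hT (m + 1) le_rfl
    have h4 : D m * ∑ i ∈ Finset.range (m + 1), a i ≤ 0 := mul_nonpos_of_nonneg_of_nonpos h2 h3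
    linarith

lemma mem_convexHull_signedPerm {n : ℕ} {u x : Fin n → ℝ} (hu : Antitone u)
    (hu0 : ∀ i, 0 ≤ u i) (hw : WeakSubmajorizes n u (fun i => |x i|)) :
    x ∈ convexHull ℝ {v : Fin n → ℝ | ∃ (σ : Equiv.Perm (Fin n)) (ε : Fin n → ℝ),
      (∀ i, ε i = 1 ∨ ε i = -1) ∧ v = fun i => ε i * u (σ i)} := by
  set G : Set (Fin n → ℝ) := {v : Fin n → ℝ | ∃ (σ : Equiv.Perm (Fin n)) (ε : Fin n → ℝ),
      (∀ i, ε i = 1 ∨ ε i = -1) ∧ v = fun i => ε i * u (σ i)} with hG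
  have hGfin : G.Finite := by
    have hsub : G ⊆ Set.range (fun pb : Equiv.Perm (Fin n) × (Fin n → Bool) =>
        fun i => (if pb.2 i then (1 : ℝ) else -1) * u (pb.1 i)) := by
      rintro v ⟨σ, ε, hε, rfl⟩
      refine ⟨(σ, fun i => decide (ε i = 1)), ?_⟩
      funext i
      rcases hε i with h | h
      · simp [h]
      · have hne : ε i ≠ 1 := by rw [h]; norm_num
        show (if decide (ε i = 1) = true then (1:ℝ) else -1) * u (σ i) = ε i * u (σ i)
        rw [decide_eq_false hne, h]
        simp
    exact Set.Finite.subset (Set.finite_range _) hsub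
  by_contra hx
  obtain ⟨f, s, hfs, hsx⟩ := _root_.geometric_hahn_banach_closed_point
    (convex_convexHull ℝ G) (hGfin.isCompact_convexHull (𝕜 := ℝ)).isClosed hx
  set c : Fin n → ℝ := fun i => f (fun j => if i = j then 1 else 0) with hc
  have hf : ∀ v, f v = ∑ i, c i * v i := by
    intro v
    conv_lhs => rw [pi_eq_sum_univ v, map_sum]
    refine Finset.sum_congr rfl fun i _ => ?_
    rw [map_smul]
    simp [hc, mul_comm]
  set ca : Fin n → ℝ := fun i => |c i| with hca
  set d : Fin n → ℝ := sortedDesc n ca with hd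
  obtain ⟨π, hπ⟩ := sortedDesc_perm n ca
  have hd0 : ∀ j, 0 ≤ d j := fun j => by rw [hd, hπ]; exact abs_nonneg _
  have hd_anti : Antitone d := sortedDesc_antitone n ca
  set ε : Fin n → ℝ := fun i => if c i < 0 then -1 else 1 with hε
  have hεc : ∀ i, c i * ε i = ca i := by
    intro i
    by_cases h : c i < 0
    · simp [hε, hca, h, abs_of_neg h]
    · simp [hε, hca, h, abs_of_nonneg (not_lt.mp h)]
  set vstar : Fin n → ℝ := fun i => ε i * u (π.symm i) with hvstar
  have hvG : vstar ∈ G := by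
    refine ⟨π.symm, ε, fun i => ?_, rfl⟩
    by_cases h : c i < 0 <;> simp [hε, h]
  have h1 : f vstar = ∑ j, d j * u j := by
    rw [hf]
    have e1 : ∀ i, c i * vstar i = ca i * u (π.symm i) := by
      intro i; rw [hvstar]; simp only; rw [← mul_assoc, hεc]
    rw [Finset.sum_congr rfl (fun i _ => e1 i)]
    rw [← Equiv.sum_comp π (fun i => ca i * u (π.symm i))]
    refine Finset.sum_congr rfl fun j _ => ?_
    rw [Equiv.symm_apply_apply, hd, hπ]
    rfl
  set w : Fin n → ℝ := fun i => |x i| with hwdef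
  have h2 : f x ≤ ∑ i, ca i * w i := by
    rw [hf]
    refine Finset.sum_le_sum fun i _ => ?_
    calc c i * x i ≤ |c i * x i| := le_abs_self _
      _ = ca i * w i := by rw [abs_mul]
  set v : Fin n → ℝ := sortedDesc n w with hv
  obtain ⟨ρ, hρ⟩ := sortedDesc_perm n w
  have hv_anti : Antitone v := sortedDesc_antitone n w
  set τ : Equiv.Perm (Fin n) := π.trans ρ.symm with hτ
  have h3 : ∑ i, ca i * w i = ∑ j, d j * v (τ j) := by
    rw [← Equiv.sum_comp π (fun i => ca i * w i)]
    refine Finset.sum_congr rfl fun j _ => ?_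
    have e1 : d j = ca (π j) := by rw [hd, hπ]; rfl
    have e2 : v (τ j) = w (π j) := by
      rw [hv, hρ]
      simp [hτ]
    rw [e1, e2]
  have hmono : Monovary d v := by
    intro i j hij
    have hji : j ≤ i := by
      by_contra hcon
      push_neg at hcon
      exact absurd hij (not_lt.mpr (hv_anti (le_of_lt hcon)))
    exact hd_anti hji
  have h4 : ∑ j, d j * v (τ j) ≤ ∑ j, d j * v j := by
    have := hmono.sum_smul_comp_perm_le_sum_smul (σ := τ)
    simpa [smul_eq_mul] using this
  have h5 : ∑ j, d j * v j ≤ ∑ j, d j * u j := by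
    have key : ∑ j, d j * (v j - u j) ≤ 0 := by
      set D : ℕ → ℝ := fun m => if h : m < n then d ⟨m, h⟩ else 0 with hD
      set a : ℕ → ℝ := fun m => if h : m < n then v ⟨m, h⟩ - u ⟨m, h⟩ else 0 with ha
      have hsum : ∑ j : Fin n, d j * (v j - u j) = ∑ m ∈ Finset.range n, D m * a m := by
        rw [← Fin.sum_univ_eq_sum_range (fun m => D m * a m) n]
        refine Fintype.sum_congr _ _ fun j => ?_
        rw [hD, ha]
        simp only [dif_pos j.isLt]
      rw [hsum]
      apply abel_nonpos
      · intro i j hij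
        by_cases hj : j < n
        · have hi : i < n := lt_of_le_of_lt hij hj
          rw [hD]
          simp only [dif_pos hj, dif_pos hi]
          exact hd_anti (by exact hij)
        · rw [hD]
          simp only [dif_neg hj]
          by_cases hi : i < n
          · simp only [dif_pos hi]; exact hd0 _
          · simp [dif_neg hi]
      · intro m hm
        rw [hD]
        simp only [dif_pos hm]
        exact hd0 _
      · intro k hk
        have e1 : ∑ m ∈ Finset.range k, a m
            = ∑ i ∈ Finset.univ.filter (fun i : Fin n => (i : ℕ) < k), (v i - u i) := by
          rw [sum_filter_lt_eq_range hk (fun j => v j - u j)]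
        rw [e1, Finset.sum_sub_distrib]
        have e2 : ∑ i ∈ Finset.univ.filter (fun i : Fin n => (i : ℕ) < k), v i
            = topSum n w k := (topSum_def n w k).symm
        have e3 : ∑ i ∈ Finset.univ.filter (fun i : Fin n => (i : ℕ) < k), u i
            = topSum n u k := (topSum_antitone hu hk).symm
        rw [e2, e3]
        have := hw k hk
        linarith
    have expand : ∑ j, d j * (v j - u j) = ∑ j, d j * v j - ∑ j, d j * u j := by
      rw [← Finset.sum_sub_distrib]
      exact Finset.sum_congr rfl fun j _ => by ring
    linarith [key, expand.symm.trans_le key]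
  have hfv : f vstar < s := hfs vstar (subset_convexHull ℝ G hvG)
  have : f x ≤ f vstar := by
    rw [h1]
    calc f x ≤ ∑ i, ca i * w i := h2
      _ = ∑ j, d j * v (τ j) := h3
      _ ≤ ∑ j, d j * v j := h4
      _ ≤ ∑ j, d j * u j := h5
  linarith

lemma convexHull_inter_antitone_nonneg {n p : ℕ} (S : Set ((Fin n → ℝ) × (Fin p → ℝ))) :
    convexHull ℝ (S ∩ {r | Antitone r.1 ∧ ∀ i, 0 ≤ r.1 i})
      ⊆ {r | Antitone r.1 ∧ ∀ i, 0 ≤ r.1 i} := by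
  apply convexHull_min Set.inter_subset_right
  rintro r ⟨hr1, hr2⟩ r' ⟨hr1', hr2'⟩ a b ha hb hab
  constructor
  · intro i j hij
    show a * r.1 j + b * r'.1 j ≤ a * r.1 i + b * r'.1 i
    exact add_le_add (mul_le_mul_of_nonneg_left (hr1 hij) ha)
      (mul_le_mul_of_nonneg_left (hr1' hij) hb)
  · intro i
    show 0 ≤ a * r.1 i + b * r'.1 i
    exact add_nonneg (mul_nonneg ha (hr2 i)) (mul_nonneg hb (hr2' i))

theorem convexHull_sign_and_permutation_invariant (n p : ℕ)
    (S : Set ((Fin n → ℝ) × (Fin p → ℝ)))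
    (hSperm : ∀ x z, (x, z) ∈ S → ∀ σ : Equiv.Perm (Fin n), (x ∘ σ, z) ∈ S)
    (hSsign : ∀ x z, (x, z) ∈ S → ∀ x' : Fin n → ℝ, (∀ i, |x' i| = |x i|) → (x', z) ∈ S) :
    convexHull ℝ S =
      {q : (Fin n → ℝ) × (Fin p → ℝ) | ∃ u : Fin n → ℝ,
        (u, q.2) ∈ convexHull ℝ (S ∩ {r | Antitone r.1 ∧ ∀ i, 0 ≤ r.1 i}) ∧
        WeakSubmajorizes n u (fun i => |q.1 i|)} := by
  apply Set.Subset.antisymm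
  · apply convexHull_min
    · rintro ⟨x, z⟩ hxz
      obtain ⟨σ, hσ⟩ := sortedDesc_perm n (fun i => |x i|)
      refine ⟨sortedDesc n (fun i => |x i|), ?_, ?_⟩
      · apply subset_convexHull
        have h1 : ((fun i => |x i|), z) ∈ S := hSsign x z hxz _ (fun i => abs_abs _)
        have h2 := hSperm _ z h1 σ
        have h3 : (sortedDesc n (fun i => |x i|), z) ∈ S := by rw [hσ]; exact h2
        refine ⟨h3, ?_, ?_⟩
        · show Antitone (sortedDesc n (fun i => |x i|))
          exact sortedDesc_antitone n _
        · intro i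
          show (0:ℝ) ≤ sortedDesc n (fun i => |x i|) i
          rw [hσ]; exact abs_nonneg _
      · intro k hk
        show topSum n (fun i => |x i|) k ≤ topSum n (sortedDesc n (fun i => |x i|)) k
        rw [hσ, topSum_perm _ σ hk]
    · rintro ⟨x, z⟩ ⟨u, hu, hwu⟩ ⟨x', z'⟩ ⟨u', hu', hwu'⟩ a b ha hb hab
      have h0 := convexHull_inter_antitone_nonneg S hu
      have h0' := convexHull_inter_antitone_nonneg S hu'
      have hcomb_anti : Antitone (fun i => a * u i + b * u' i) := fun i j hij =>
        add_le_add (mul_le_mul_of_nonneg_left (h0.1 hij) ha)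
          (mul_le_mul_of_nonneg_left (h0'.1 hij) hb)
      refine ⟨fun i => a * u i + b * u' i, ?_, ?_⟩
      · have hmem := (convex_convexHull ℝ (S ∩ {r | Antitone r.1 ∧ ∀ i, 0 ≤ r.1 i}))
          hu hu' ha hb hab
        exact hmem
      · intro k hk
        show topSum n (fun i => |a * x i + b * x' i|) k
          ≤ topSum n (fun i => a * u i + b * u' i) k
        calc topSum n (fun i => |a * x i + b * x' i|) k
            ≤ topSum n (fun i => a * |x i| + b * |x' i|) k := by
              refine topSum_mono (fun i => ?_) hk
              calc |a * x i + b * x' i| ≤ |a * x i| + |b * x' i| := abs_add_le _ _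
                _ = a * |x i| + b * |x' i| := by
                    rw [abs_mul, abs_mul, abs_of_nonneg ha, abs_of_nonneg hb]
          _ ≤ topSum n (fun i => a * |x i|) k + topSum n (fun i => b * |x' i|) k :=
              topSum_add_le _ _ hk
          _ = a * topSum n (fun i => |x i|) k + b * topSum n (fun i => |x' i|) k := by
              rw [topSum_smul _ ha hk, topSum_smul _ hb hk]
          _ ≤ a * topSum n u k + b * topSum n u' k :=
              add_le_add (mul_le_mul_of_nonneg_left (hwu k hk) ha)
                (mul_le_mul_of_nonneg_left (hwu' k hk) hb)
          _ = topSum n (fun i => a * u i + b * u' i) k := by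
              rw [topSum_antitone h0.1 hk, topSum_antitone h0'.1 hk,
                topSum_antitone hcomb_anti hk, Finset.mul_sum, Finset.mul_sum,
                ← Finset.sum_add_distrib]
  · rintro ⟨x, z⟩ ⟨u, huz, hw⟩
    have h0 := convexHull_inter_antitone_nonneg S huz
    have hkey := mem_convexHull_signedPerm h0.1 h0.2 hw
    set G : Set (Fin n → ℝ) := {v : Fin n → ℝ | ∃ (σ : Equiv.Perm (Fin n)) (ε : Fin n → ℝ),
      (∀ i, ε i = 1 ∨ ε i = -1) ∧ v = fun i => ε i * u (σ i)} with hGdef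
    have hGz : G ×ˢ ({z} : Set (Fin p → ℝ)) ⊆ convexHull ℝ S := by
      rintro ⟨v, z'⟩ ⟨⟨σ, ε, hε, rfl⟩, hz'⟩
      have hz2 : z' = z := hz'
      rw [hz2]
      let Φ : ((Fin n → ℝ) × (Fin p → ℝ)) →ₗ[ℝ] ((Fin n → ℝ) × (Fin p → ℝ)) :=
        { toFun := fun r => ((fun i => ε i * r.1 (σ i)), r.2)
          map_add' := by
            intro r s
            refine Prod.ext ?_ rfl
            funext i
            show ε i * (r.1 (σ i) + s.1 (σ i)) = ε i * r.1 (σ i) + ε i * s.1 (σ i)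
            ring
          map_smul' := by
            intro cst r
            refine Prod.ext ?_ rfl
            funext i
            show ε i * (cst * r.1 (σ i)) = cst * (ε i * r.1 (σ i))
            ring }
      have hΦS : ∀ r ∈ S ∩ {r | Antitone r.1 ∧ ∀ i, 0 ≤ r.1 i}, Φ r ∈ S := by
        rintro ⟨y, zz⟩ ⟨hyS, -⟩
        have h1 := hSperm y zz hyS σ
        refine hSsign _ zz h1 _ (fun i => ?_)
        rcases hε i with h | h <;> simp [h, abs_mul, Function.comp]
      have himg : Φ '' (convexHull ℝ (S ∩ {r | Antitone r.1 ∧ ∀ i, 0 ≤ r.1 i}))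
          ⊆ convexHull ℝ S := by
        rw [Φ.image_convexHull]
        refine convexHull_mono ?_
        rintro r ⟨rr, hrr, rfl⟩
        exact hΦS rr hrr
      exact himg ⟨(u, z), huz, rfl⟩
    have hx : ((x, z) : (Fin n → ℝ) × (Fin p → ℝ))
        ∈ convexHull ℝ (G ×ˢ ({z} : Set (Fin p → ℝ))) := by
      rw [convexHull_prod]
      exact ⟨hkey, by rw [convexHull_singleton]; rfl⟩
    exact convexHull_min hGz (convex_convexHull ℝ S) hx
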